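/- Let T be a string of length n and let i be a position such that some SAGP w·g·u·uᴿ·wᴿ occurs in T with pivot i where u·uᴿ is the maximal even palindrome centered at i (a type-1 position). Then a SAGP w·g·u·uᴿ·wᴿ for pivot i is a canonical longest SAGP for pivot i if and only if u·uᴿ is the maximal even palindrome centered at i and wᴿ is the longest nonempty prefix of T[i+|u|+1..n] such that w occurs at least once in T[1..i−|u|−1]. -/

import Mathlib

/-- 1-based substring T[b..e]. -/
def sub (T : List Char) (b e : ℕ) : List Char := (T.drop (b-1)).take (e+1-b)

/-- The string x occurs in T beginning at 1-based position p. -/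
def occursAt (T x : List Char) (p : ℕ) : Prop := x <+: T.drop (p-1)

/-- T has an even palindrome of radius r centered at position i (i.e. T[i-r+1..i+r] is a palindrome). -/
def evenPalAt (T : List Char) (i r : ℕ) : Prop :=
  r ≤ i ∧ i + r ≤ T.length ∧ (sub T (i-r+1) (i+r)).reverse = sub T (i-r+1) (i+r)

/-- The SAGP w·g·u·uᴿ·wᴿ (w, g, u nonempty) occurs in T with pivot i. -/
def SAGPat (T : List Char) (i : ℕ) (w g u : List Char) : Prop :=
  w ≠ [] ∧ g ≠ [] ∧ u ≠ [] ∧ ∃ b, 1 ≤ b ∧ b + (w.length + g.length + u.length) = i + 1 ∧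
    occursAt T (w ++ g ++ u ++ u.reverse ++ w.reverse) b

/-- w·g·u·uᴿ·wᴿ is a longest SAGP for pivot i (maximal arm length |wu|). -/
def longestSAGP (T : List Char) (i : ℕ) (w g u : List Char) : Prop :=
  SAGPat T i w g u ∧ ∀ w' g' u', SAGPat T i w' g' u' → w'.length + u'.length ≤ w.length + u.length

/-- w·g·u·uᴿ·wᴿ is a canonical longest SAGP for pivot i (moreover |u| maximal among longest). -/
def canonSAGP (T : List Char) (i : ℕ) (w g u : List Char) : Prop :=
  longestSAGP T i w g u ∧ ∀ w' g' u', longestSAGP T i w' g' u' → u'.length ≤ u.length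

/-- Position i is of type-1: some SAGP for pivot i has u·uᴿ equal to the maximal even palindrome centered at i. -/
def type1 (T : List Char) (i : ℕ) : Prop :=
  ∃ w g u, SAGPat T i w g u ∧ ∀ r, evenPalAt T i r → r ≤ u.length

/- ### Auxiliary lemmas -/

lemma chainPrefix {T a b : List Char} {m : ℕ} (ha : a <+: T.drop m)
    (hb : b <+: T.drop (m + a.length)) : a ++ b <+: T.drop m := by
  obtain ⟨t, ht⟩ := ha
  rw [show T.drop (m + a.length) = (T.drop m).drop a.length by rw [List.drop_drop],
    ← ht, List.drop_left] at hb
  obtain ⟨s, hs⟩ := hb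
  exact ⟨s, by rw [List.append_assoc, hs, ht]⟩

/-- Extraction of facts from a SAGP occurrence. -/
lemma extract {T : List Char} {i : ℕ} {w g u : List Char} (h : SAGPat T i w g u) :
    ∃ b, 1 ≤ b ∧ b + (w.length + g.length + u.length) = i + 1 ∧
      occursAt T w b ∧
      b + w.length + u.length ≤ i ∧
      w.reverse <+: T.drop (i + u.length) ∧
      evenPalAt T i u.length := by
  obtain ⟨hw, hg, hu, b, hb1, hbe, hocc⟩ := h
  have hwl : 1 ≤ w.length := List.length_pos_iff.mpr hw
  have hgl : 1 ≤ g.length := List.length_pos_iff.mpr hg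
  have hul : 1 ≤ u.length := List.length_pos_iff.mpr hu
  obtain ⟨t, ht⟩ := hocc
  have ht' : w ++ (g ++ (u ++ (u.reverse ++ (w.reverse ++ t)))) = T.drop (b-1) := by
    simpa [List.append_assoc] using ht
  -- drop at the start of u ++ uᴿ
  have hd1 : T.drop (i - u.length) = u ++ u.reverse ++ (w.reverse ++ t) := by
    have e1 : T.drop (i - u.length) = (T.drop (b-1)).drop (w.length + g.length) := by
      rw [List.drop_drop]; congr 1; omega
    rw [e1, ← ht',
      show w ++ (g ++ (u ++ (u.reverse ++ (w.reverse ++ t))))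
          = (w ++ g) ++ (u ++ u.reverse ++ (w.reverse ++ t)) by
        simp [List.append_assoc]]
    exact List.drop_left' (by simp)
  -- drop at the start of wᴿ
  have hd2 : T.drop (i + u.length) = w.reverse ++ t := by
    have e1 : T.drop (i + u.length) = (T.drop (b-1)).drop
        (w.length + g.length + u.length + u.length) := by
      rw [List.drop_drop]; congr 1; omega
    rw [e1, ← ht',
      show w ++ (g ++ (u ++ (u.reverse ++ (w.reverse ++ t))))
          = (w ++ g ++ u ++ u.reverse) ++ (w.reverse ++ t) by
        simp [List.append_assoc]]
    exact List.drop_left' (by simp; omega)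
  have hlen2 : (T.drop (i + u.length)).length = T.length - (i + u.length) :=
    List.length_drop
  rw [hd2] at hlen2
  simp at hlen2
  have hTlen : i + u.length + (w.length + t.length) ≤ T.length := by omega
  refine ⟨b, hb1, hbe, ⟨g ++ (u ++ (u.reverse ++ (w.reverse ++ t))), ht'⟩, by omega,
    ⟨t, hd2.symm⟩, ?_, ?_, ?_⟩
  · omega
  · omega
  · have hsub : sub T (i - u.length + 1) (i + u.length) = u ++ u.reverse := by
      unfold sub
      rw [show i - u.length + 1 - 1 = i - u.length by omega,
        show i + u.length + 1 - (i - u.length + 1) = u.length + u.length by omega,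
        hd1]
      exact List.take_left' (by simp)
    rw [hsub, List.reverse_append, List.reverse_reverse]

/-- Construction of a SAGP from an arm `x` occurring left of the maximal
palindrome and whose reverse occurs right of it. -/
lemma constr {T : List Char} {i r p : ℕ} {x : List Char}
    (hpal : evenPalAt T i r) (hr : 1 ≤ r) (hx : x ≠ []) (hp : 1 ≤ p)
    (hle : p + x.length + r ≤ i) (hocc : occursAt T x p)
    (hxr : x.reverse <+: T.drop (i + r)) :
    ∃ g' u', u'.length = r ∧ SAGPat T i x g' u' := by
  obtain ⟨hri, hTl, hpal'⟩ := hpal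
  have hxl : 1 ≤ x.length := List.length_pos_iff.mpr hx
  set P := (T.drop (i - r)).take (r + r) with hPdef
  have hP : sub T (i - r + 1) (i + r) = P := by
    unfold sub
    rw [show i - r + 1 - 1 = i - r by omega,
      show i + r + 1 - (i - r + 1) = r + r by omega]
  rw [hP] at hpal'
  have hPlen : P.length = r + r := by
    rw [hPdef, List.length_take, List.length_drop]; omega
  set u' := P.take r with hu'def
  have hu'len : u'.length = r := by
    rw [hu'def, List.length_take]; omega
  have hdlen : (P.drop r).length = r := by
    rw [List.length_drop, hPlen]; omega
  have hrev : u'.reverse = P.drop r := by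
    rw [hu'def, List.reverse_take, hpal', hPlen]
    congr 1
    omega
  have hPsplit : P = u' ++ u'.reverse := by
    rw [hrev, hu'def, List.take_append_drop]
  set g' := (T.drop (p + x.length - 1)).take (i - r - (p + x.length) + 1) with hg'def
  have hg'len : g'.length = i - r - (p + x.length) + 1 := by
    rw [hg'def, List.length_take, List.length_drop]; omega
  refine ⟨g', u', hu'len, hx, ?_, ?_, p, hp, by omega, ?_⟩
  · intro h; rw [h] at hg'len; simp at hg'len
  · intro h; rw [h] at hu'len; simp at hu'len; omega
  · -- occurrence of x ++ g' ++ u' ++ u'ᴿ ++ xᴿ at p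
    unfold occursAt
    have hPpre : u' ++ u'.reverse <+: T.drop (i - r) := by
      rw [← hPsplit, hPdef]; exact List.take_prefix _ _
    have hg'occ : g' <+: T.drop (p - 1 + x.length) := by
      rw [show p - 1 + x.length = p + x.length - 1 by omega, hg'def]
      exact List.take_prefix _ _
    have hu'occ : u' ++ u'.reverse <+: T.drop (p - 1 + x.length + g'.length) := by
      rw [show p - 1 + x.length + g'.length = i - r by omega]
      exact hPpre
    have hxrocc : x.reverse <+: T.drop
        (p - 1 + x.length + g'.length + (u' ++ u'.reverse).length) := by
      rw [show p - 1 + x.length + g'.length + (u' ++ u'.reverse).length = i + r by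
        simp [hu'len, hg'len]; omega]
      exact hxr
    have main : x ++ (g' ++ ((u' ++ u'.reverse) ++ x.reverse)) <+: T.drop (p - 1) := by
      apply chainPrefix hocc
      apply chainPrefix hg'occ
      rw [show p - 1 + x.length + g'.length = p - 1 + x.length + g'.length from rfl]
      apply chainPrefix hu'occ
      exact hxrocc
    simpa [List.append_assoc] using main

/-- characterization of canonical longest SAGPs at a type-1 position. -/
theorem canonical_longest_SAGP_iff (T : List Char) (n i : ℕ) (hn : n = T.length)
    (h1 : type1 T i) (w g u : List Char) (hs : SAGPat T i w g u) :
    canonSAGP T i w g u ↔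
      ((∀ r, evenPalAt T i r → r ≤ u.length) ∧
       w.reverse ≠ [] ∧ w.reverse <+: T.drop (i + u.length) ∧
       (∃ p, 1 ≤ p ∧ p + w.length ≤ i - u.length ∧ occursAt T w p) ∧
       (∀ v : List Char, v ≠ [] → v <+: T.drop (i + u.length) →
          (∃ p, 1 ≤ p ∧ p + v.length ≤ i - u.length ∧ occursAt T v.reverse p) →
          v.length ≤ w.length)) := by
  obtain ⟨b, hb1, hbe, hwocc, hbwu, hwrpre, hpal⟩ := extract hs
  have hwne : w ≠ [] := hs.1
  have hune : u ≠ [] := hs.2.2.1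
  have hwl : 1 ≤ w.length := List.length_pos_iff.mpr hwne
  have hul : 1 ≤ u.length := List.length_pos_iff.mpr hune
  have hui : u.length ≤ i := hpal.1
  constructor
  · rintro ⟨⟨-, hlong⟩, hcanon⟩
    obtain ⟨w0, g0, u0, hs0, hmax0⟩ := h1
    obtain ⟨b0, hb01, hb0e, hw0occ, hb0wu, hw0rpre, hpal0⟩ := extract hs0
    have hw0l : 1 ≤ w0.length := List.length_pos_iff.mpr hs0.1
    have hu0l : 1 ≤ u0.length := List.length_pos_iff.mpr hs0.2.2.1
    -- first: u0.length ≤ u.length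
    have hkey : u0.length ≤ u.length := by
      by_contra hlt
      push_neg at hlt
      have harm : w0.length + u0.length ≤ w.length + u.length := hlong w0 g0 u0 hs0
      set k := w.length + u.length - u0.length with hkdef
      have hk1 : 1 ≤ k := by omega
      have hkw : k ≤ w.length := by omega
      set x := w.take k with hxdef
      have hxlen : x.length = k := by rw [hxdef, List.length_take]; omega
      have hxocc : occursAt T x b := (List.take_prefix k w).trans hwocc
      have hxr : x.reverse <+: T.drop (i + u0.length) := by
        have := hwrpre.drop (w.length - k)
        rw [List.drop_drop] at this
        rw [hxdef, List.reverse_take,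
          show w.length - k = w.length - k from rfl]
        rw [show i + u0.length = i + u.length + (w.length - k) by omega]
        exact this
      obtain ⟨g', u', hu'len, hsx⟩ := constr hpal0 hu0l (by
          intro h; rw [h] at hxlen; simp at hxlen; omega) hb1
        (by omega) hxocc hxr
      have harm' : x.length + u'.length = w.length + u.length := by omega
      have hlongx : longestSAGP T i x g' u' := by
        refine ⟨hsx, fun w'' g'' u'' hs'' => ?_⟩
        rw [harm']; exact hlong w'' g'' u'' hs''
      have := hcanon x g' u' hlongx
      omega
    refine ⟨fun r hr => le_trans (hmax0 r hr) hkey, by simp [hwne], hwrpre,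
      ⟨b, hb1, by omega, hwocc⟩, ?_⟩
    rintro v hv hvpre ⟨p, hp1, hple, hpocc⟩
    have hvl : 1 ≤ v.length := List.length_pos_iff.mpr hv
    obtain ⟨g', u', hu'len, hsx⟩ := constr hpal hul (by simp [hv]) hp1
      (by simp; omega) hpocc (by rw [List.reverse_reverse]; exact hvpre)
    have := hlong v.reverse g' u' hsx
    simp [hu'len] at this
    omega
  · rintro ⟨hR, -, hwpre, ⟨p, hp1, hple, hpocc⟩, hmaxv⟩
    have hlong : ∀ w' g' u', SAGPat T i w' g' u' →
        w'.length + u'.length ≤ w.length + u.length := by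
      intro w' g' u' hs'
      obtain ⟨b', hb'1, hb'e, hw'occ, hb'wu, hw'rpre, hpal'⟩ := extract hs'
      have hw'l : 1 ≤ w'.length := List.length_pos_iff.mpr hs'.1
      have hu'u : u'.length ≤ u.length := hR u'.length hpal'
      by_cases hcase : w'.length + u'.length ≤ u.length
      · omega
      · push_neg at hcase
        set k := w'.length + u'.length - u.length with hkdef
        have hk1 : 1 ≤ k := by omega
        have hkw : k ≤ w'.length := by omega
        set x := w'.take k with hxdef
        have hxlen : x.length = k := by rw [hxdef, List.length_take]; omega
        have hxr : x.reverse <+: T.drop (i + u.length) := by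
          have := hw'rpre.drop (w'.length - k)
          rw [List.drop_drop] at this
          rw [hxdef, List.reverse_take]
          rw [show i + u.length = i + u'.length + (w'.length - k) by omega]
          exact this
        have hvk := hmaxv x.reverse (by
            intro h
            have : x.reverse.length = 0 := by rw [h]; rfl
            simp [hxlen] at this; omega) hxr
          ⟨b', hb'1, by simp [hxlen]; omega,
            by rw [List.reverse_reverse]; exact (List.take_prefix k w').trans hw'occ⟩
        simp [hxlen] at hvk
        omega
    refine ⟨⟨hs, hlong⟩, fun w' g' u' hl' => ?_⟩
    obtain ⟨b', hb'1, hb'e, hw'occ, hb'wu, hw'rpre, hpal'⟩ := extract hl'.1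
    exact hR u'.length hpal'
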